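/- arXiv:1509.02493 — 2 statements merged into one kernel-verified Lean document; each statement's English description precedes it below -/
import Mathlib

section
/- Let ⟨X, Y⟩ be a norming Banach dual pair, E and G Banach function spaces, T : E → G a linear operator dominated by a positive bounded operator R : E → G, and suppose T_Y : E(Y) → G(Y) is a map satisfying ⟨x, T_Y e⟩ = T⟨x, e⟩ for all e ∈ E(Y), x ∈ X. Then T_Y is a bounded linear operator with ‖T_Y‖ ≤ ‖R‖. -/
open MeasureTheory

/-- A (model of a) Banach function space on a measure space: a Banach lattice `E`
together with an injective lattice-respecting linear embedding `ι` into `L⁰(μ)`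
whose range is an order ideal. -/
structure IsBanachFunctionSpace {α : Type*} [MeasurableSpace α] (μ : Measure α)
    (E : Type*) [NormedAddCommGroup E] [Lattice E] [HasSolidNorm E] [IsOrderedAddMonoid E] [NormedSpace ℝ E] [CompleteSpace E]
    (ι : E →ₗ[ℝ] (α →ₘ[μ] ℝ)) : Prop where
  inj : Function.Injective ι
  map_abs : ∀ e : E, ⇑(ι |e|) =ᵐ[μ] fun a => |(ι e) a|
  ideal : ∀ (f : α →ₘ[μ] ℝ) (e : E), (∀ᵐ a ∂μ, |f a| ≤ |(ι e) a|) → ∃ e' : E, ι e' = f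

/-- `f` is a member of the Köthe–Bochner space `E(Y)`, with `e ∈ E` representing its
pointwise norm function `a ↦ ‖f a‖`. -/
def MemKB {α E : Type*} [MeasurableSpace α] {μ : Measure α}
    [NormedAddCommGroup E] [Lattice E] [HasSolidNorm E] [IsOrderedAddMonoid E] [NormedSpace ℝ E]
    {Y : Type*} [NormedAddCommGroup Y]
    (ι : E →ₗ[ℝ] (α →ₘ[μ] ℝ)) (f : α → Y) (e : E) : Prop :=
  AEStronglyMeasurable f μ ∧ (fun a => ‖f a‖) =ᵐ[μ] ⇑(ι e)

/-- A norming Banach dual pairing between `X` and `Y`: a bounded bilinear form such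
that the norms of `X` and of `Y` are recovered by pairing against the closed unit
ball of the other space. -/
def IsNormingDualPair {X Y : Type*} [NormedAddCommGroup X] [NormedSpace ℝ X]
    [NormedAddCommGroup Y] [NormedSpace ℝ Y] (B : X →L[ℝ] Y →L[ℝ] ℝ) : Prop :=
  (∀ x : X, ‖x‖ = ⨆ y : {y : Y // ‖y‖ ≤ 1}, |B x y|) ∧
  (∀ y : Y, ‖y‖ = ⨆ x : {x : X // ‖x‖ ≤ 1}, |B x y|)


section aux
variable {α E : Type*} [MeasurableSpace α] {μ : Measure α}
  [NormedAddCommGroup E] [Lattice E] [HasSolidNorm E] [IsOrderedAddMonoid E] [NormedSpace ℝ E] [CompleteSpace E]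
  {ι : E →ₗ[ℝ] (α →ₘ[μ] ℝ)}

lemma IsBanachFunctionSpace.le_of_ae_le (hE : IsBanachFunctionSpace μ E ι) {u v : E}
    (h : ∀ᵐ a ∂μ, (ι u) a ≤ (ι v) a) : u ≤ v := by
  have h1 : ⇑(ι (v - u)) =ᵐ[μ] fun a => (ι v) a - (ι u) a := by
    rw [map_sub]; exact AEEqFun.coeFn_sub _ _
  have h2 : ⇑(ι |v - u|) =ᵐ[μ] ⇑(ι (v - u)) := by
    filter_upwards [hE.map_abs (v - u), h1, h] with a ha hb hc
    rw [ha, hb, abs_of_nonneg (by linarith)]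
  have h3 := hE.inj (AEEqFun.ext h2)
  have h0 : 0 ≤ v - u := h3 ▸ abs_nonneg _
  exact sub_nonneg.mp h0

lemma IsBanachFunctionSpace.ae_le_of_le (hE : IsBanachFunctionSpace μ E ι) {u v : E}
    (h : u ≤ v) : ∀ᵐ a ∂μ, (ι u) a ≤ (ι v) a := by
  have h1 : ⇑(ι (v - u)) =ᵐ[μ] fun a => (ι v) a - (ι u) a := by
    rw [map_sub]; exact AEEqFun.coeFn_sub _ _
  have h2 := hE.map_abs (v - u)
  rw [abs_of_nonneg (sub_nonneg.mpr h)] at h2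
  filter_upwards [h1, h2] with a ha hb
  have := abs_nonneg ((ι (v - u)) a)
  rw [← hb] at this
  rw [ha] at this
  linarith
end aux

section norming
variable {X Y : Type*} [NormedAddCommGroup X] [NormedSpace ℝ X]
  [NormedAddCommGroup Y] [NormedSpace ℝ Y]

lemma bddAbove_pair (B : X →L[ℝ] Y →L[ℝ] ℝ) (y : Y) :
    BddAbove (Set.range fun x : {x : X // ‖x‖ ≤ 1} => |B x y|) := by
  refine ⟨‖B‖ * ‖y‖, ?_⟩
  rintro _ ⟨x, rfl⟩
  have h := (B : X →L[ℝ] Y →L[ℝ] ℝ).le_opNorm₂ (x : X) y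
  have hx : ‖(x : X)‖ ≤ 1 := x.2
  show |B (x:X) y| ≤ ‖B‖ * ‖y‖
  have heq : |B (x:X) y| = ‖B (x:X) y‖ := (Real.norm_eq_abs _).symm
  rw [heq]
  nlinarith [mul_nonneg (ContinuousLinearMap.opNorm_nonneg (B : X →L[ℝ] Y →L[ℝ] ℝ)) (norm_nonneg y), norm_nonneg (x:X)]

lemma norming_countable (B : X →L[ℝ] Y →L[ℝ] ℝ)
    (hB : ∀ y : Y, ‖y‖ = ⨆ x : {x : X // ‖x‖ ≤ 1}, |B x y|)
    {D : Set Y} (hD : D.Countable) :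
    ∃ s : ℕ → X, (∀ n, ‖s n‖ ≤ 1) ∧
      ∀ y ∈ closure D, ∀ C : ℝ, (∀ n, |B (s n) y| ≤ C) → ‖y‖ ≤ C := by
  rcases D.eq_empty_or_nonempty with rfl | hne
  · exact ⟨fun _ => 0, fun _ => by simp, fun y hy => by simp at hy⟩
  obtain ⟨d, hd⟩ := Set.Countable.exists_eq_range hD hne
  have key : ∀ i n : ℕ, ∃ x : {x : X // ‖x‖ ≤ 1}, ‖d i‖ - 1/(n+1) < |B x (d i)| := by
    intro i n
    have hlt : ‖d i‖ - 1/(n+1) < ⨆ x : {x : X // ‖x‖ ≤ 1}, |B x (d i)| := by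
      rw [← hB]
      have : (0:ℝ) < 1/(n+1) := by positivity
      linarith
    haveI : Nonempty {x : X // ‖x‖ ≤ 1} := ⟨⟨0, by simp⟩⟩
    exact (lt_ciSup_iff (bddAbove_pair B (d i))).mp hlt
  choose x hx using key
  obtain ⟨p⟩ : Nonempty (ℕ ≃ ℕ × ℕ) := ⟨(Denumerable.eqv (ℕ × ℕ)).symm⟩
  refine ⟨fun k => x (p k).1 (p k).2, fun k => (x (p k).1 (p k).2).2, ?_⟩
  intro y hy C hC
  refine le_of_forall_pos_le_add ?_
  intro δ hδ
  set ε := δ / (‖B‖ + 2) with hε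
  have hBnn : (0:ℝ) ≤ ‖B‖ := ContinuousLinearMap.opNorm_nonneg _
  have hεpos : 0 < ε := div_pos hδ (by linarith)
  have hy' : y ∈ closure (Set.range d) := hd ▸ hy
  obtain ⟨z, hzmem, hz⟩ := Metric.mem_closure_iff.mp hy' ε hεpos
  obtain ⟨i, rfl⟩ := hzmem
  obtain ⟨n, hn⟩ := exists_nat_one_div_lt hεpos
  have hC' : |B (x i n : X) y| ≤ C := by simpa using hC (p.symm (i, n))
  have hdist : ‖y - d i‖ < ε := by rwa [← dist_eq_norm]
  have hx2 := hx i n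
  -- |B (x i n) (d i)| ≤ |B (x i n) y| + ‖B‖ * ε
  have h1 : |B (x i n) (d i) - B (x i n) y| ≤ ‖B‖ * ε := by
    have : B (x i n) (d i) - B (x i n) y = B (x i n) (d i - y) := by
      rw [map_sub]
    rw [this]
    have h2 := B.le_opNorm₂ ((x i n : X)) (d i - y)
    have hx1 : ‖(x i n : X)‖ ≤ 1 := (x i n).2
    have h3 : ‖d i - y‖ ≤ ε := by rw [norm_sub_rev]; linarith
    have : |B (x i n) (d i - y)| = ‖B ((x i n : X)) (d i - y)‖ := (Real.norm_eq_abs _).symm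
    rw [this]
    nlinarith [mul_nonneg (sub_nonneg.mpr hx1) (mul_nonneg hBnn (norm_nonneg (d i - y))), mul_le_mul_of_nonneg_left h3 hBnn]
  have h4 : ‖y‖ ≤ ‖d i‖ + ε := by
    have := norm_sub_norm_le y (d i)
    linarith
  have h5 : 1/((n:ℝ)+1) < ε := hn
  have h6 : (‖B‖ + 2) * ε = δ := by
    rw [hε]; field_simp
  have habs := abs_sub_abs_le_abs_sub (B (x i n) (d i)) (B (x i n) y)
  nlinarith
end norming
section aenorm
variable {β X Y : Type*} [MeasurableSpace β] {ν : MeasureTheory.Measure β}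
  [NormedAddCommGroup X] [NormedSpace ℝ X] [NormedAddCommGroup Y] [NormedSpace ℝ Y]

lemma ae_norm_le_of_pair (B : X →L[ℝ] Y →L[ℝ] ℝ)
    (hB : ∀ y : Y, ‖y‖ = ⨆ x : {x : X // ‖x‖ ≤ 1}, |B x y|)
    {h : β → Y} (hm : MeasureTheory.AEStronglyMeasurable h ν) {u : β → ℝ}
    (hu : ∀ x : X, ‖x‖ ≤ 1 → ∀ᵐ b ∂ν, |B x (h b)| ≤ u b) :
    ∀ᵐ b ∂ν, ‖h b‖ ≤ u b := by
  obtain ⟨h', hm', heq⟩ := hm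
  obtain ⟨D, hDc, hDsub⟩ := hm'.isSeparable_range
  obtain ⟨s, hs1, hs2⟩ := norming_countable B hB hDc
  have hae : ∀ᵐ b ∂ν, ∀ n, |B (s n) (h b)| ≤ u b := ae_all_iff.mpr fun n => hu (s n) (hs1 n)
  filter_upwards [hae, heq] with b hb hbe
  refine hs2 (h b) ?_ (u b) hb
  rw [hbe]
  exact hDsub (Set.mem_range_self b)
end aenorm

open MeasureTheory in
lemma ae_eq_of_pair_ae_zero {β X Y : Type*} [MeasurableSpace β] {ν : Measure β}
    [NormedAddCommGroup X] [NormedSpace ℝ X] [NormedAddCommGroup Y] [NormedSpace ℝ Y]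
    (B : X →L[ℝ] Y →L[ℝ] ℝ)
    (hB : ∀ y : Y, ‖y‖ = ⨆ x : {x : X // ‖x‖ ≤ 1}, |B x y|)
    {h₁ h₂ : β → Y} (hm₁ : AEStronglyMeasurable h₁ ν) (hm₂ : AEStronglyMeasurable h₂ ν)
    (hz : ∀ x : X, (fun b => B x (h₁ b)) =ᵐ[ν] fun b => B x (h₂ b)) :
    h₁ =ᵐ[ν] h₂ := by
  have key : ∀ᵐ b ∂ν, ‖h₁ b - h₂ b‖ ≤ (fun _ => (0:ℝ)) b := by
    refine ae_norm_le_of_pair B hB (hm₁.sub hm₂) ?_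
    intro x _
    filter_upwards [hz x] with b hb
    simp only [Pi.sub_apply, map_sub, hb, sub_self, abs_zero, le_refl]
  filter_upwards [key] with b hb
  have : ‖h₁ b - h₂ b‖ = 0 := le_antisymm hb (norm_nonneg _)
  rw [norm_eq_zero, sub_eq_zero] at this
  exact this

open MeasureTheory in
/-- membership of a sum -/
lemma MemKB.add_exists {α E : Type*} [MeasurableSpace α] {μ : Measure α}
    [NormedAddCommGroup E] [Lattice E] [HasSolidNorm E] [IsOrderedAddMonoid E] [NormedSpace ℝ E] [CompleteSpace E]
    {Y : Type*} [NormedAddCommGroup Y]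
    {ι : E →ₗ[ℝ] (α →ₘ[μ] ℝ)} (hE : IsBanachFunctionSpace μ E ι)
    {f g : α → Y} {e e' : E} (hf : MemKB ι f e) (hg : MemKB ι g e') :
    ∃ e'' : E, MemKB ι (f + g) e'' := by
  have hm : AEStronglyMeasurable (f + g) μ := hf.1.add hg.1
  set F : α →ₘ[μ] ℝ := AEEqFun.mk (fun a => ‖f a + g a‖) (by
    have : (fun a => ‖f a + g a‖) = fun a => ‖(f + g) a‖ := rfl
    rw [this]; exact hm.norm) with hF
  have hFc : ⇑F =ᵐ[μ] fun a => ‖f a + g a‖ := AEEqFun.coeFn_mk _ _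
  have hadd : ⇑(ι (|e| + |e'|)) =ᵐ[μ] fun a => (ι |e|) a + (ι |e'|) a := by
    rw [map_add]; exact AEEqFun.coeFn_add _ _
  have hle : ∀ᵐ a ∂μ, |F a| ≤ |(ι (|e| + |e'|)) a| := by
    filter_upwards [hFc, hE.map_abs e, hE.map_abs e', hadd, hf.2, hg.2] with a h1 h2 h3 h4 h5 h6
    rw [h1, h4, h2, h3, abs_of_nonneg (norm_nonneg _)]
    have hn : ‖f a + g a‖ ≤ ‖f a‖ + ‖g a‖ := norm_add_le _ _
    rw [← h5, ← h6] at *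
    calc ‖f a + g a‖ ≤ ‖f a‖ + ‖g a‖ := hn
      _ ≤ |‖f a‖| + |‖g a‖| := add_le_add (le_abs_self _) (le_abs_self _)
      _ ≤ |(|‖f a‖| + |‖g a‖|)| := le_abs_self _
  obtain ⟨e'', he''⟩ := hE.ideal F _ hle
  refine ⟨e'', hm, ?_⟩
  rw [he'']
  exact hFc.symm

/-- **Automatic boundedness of vector-valued extensions** (Remark 3.2 in the paper).
Let `⟨X, Y⟩` be a norming Banach dual pair, `T : E → G` dominated by a positive
bounded operator `R`, and let `T_Y : E(Y) → G(Y)` be a map satisfying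
`⟨x, T_Y e⟩ = T⟨x, e⟩` for all `e ∈ E(Y)`, `x ∈ X`. Then `T_Y` is linear (a.e.) and
bounded with norm at most `‖R‖`. -/
theorem extension_automatically_bounded
    {α β E G : Type*} [MeasurableSpace α] [MeasurableSpace β]
    {μ : Measure α} {ν : Measure β}
    [NormedAddCommGroup E] [Lattice E] [HasSolidNorm E] [IsOrderedAddMonoid E] [NormedSpace ℝ E] [CompleteSpace E]
    [NormedAddCommGroup G] [Lattice G] [HasSolidNorm G] [IsOrderedAddMonoid G] [NormedSpace ℝ G] [CompleteSpace G]
    (ιE : E →ₗ[ℝ] (α →ₘ[μ] ℝ)) (ιG : G →ₗ[ℝ] (β →ₘ[ν] ℝ))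
    (hE : IsBanachFunctionSpace μ E ιE) (hG : IsBanachFunctionSpace ν G ιG)
    {X Y : Type*} [NormedAddCommGroup X] [NormedSpace ℝ X]
    [NormedAddCommGroup Y] [NormedSpace ℝ Y]
    (B : X →L[ℝ] Y →L[ℝ] ℝ) (hB : IsNormingDualPair B)
    (T : E →ₗ[ℝ] G) (R : E →L[ℝ] G)
    (hRpos : ∀ e : E, 0 ≤ e → 0 ≤ R e)
    (hdom : ∀ e : E, |T e| ≤ R |e|)
    (TY : (α → Y) → (β → Y))
    -- `T_Y` maps `E(Y)` into `G(Y)`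
    (hmaps : ∀ (f : α → Y) (e : E), MemKB ιE f e → ∃ g : G, MemKB ιG (TY f) g)
    -- the scalar functions `⟨x, e⟩` belong to `E`
    (hpair : ∀ (f : α → Y) (e : E) (x : X), MemKB ιE f e →
      ∃ exy : E, (fun a => B x (f a)) =ᵐ[μ] ⇑(ιE exy))
    -- the defining relation `⟨x, T_Y e⟩ = T⟨x, e⟩`
    (hrel : ∀ (f : α → Y) (e : E) (x : X) (exy : E), MemKB ιE f e →
      ((fun a => B x (f a)) =ᵐ[μ] ⇑(ιE exy)) →
      (fun b => B x (TY f b)) =ᵐ[ν] ⇑(ιG (T exy))) :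
    -- `T_Y` is additive and homogeneous (a.e.) on `E(Y)` …
    (∀ (f g : α → Y) (e e' : E), MemKB ιE f e → MemKB ιE g e' →
      TY (f + g) =ᵐ[ν] TY f + TY g) ∧
    (∀ (c : ℝ) (f : α → Y) (e : E), MemKB ιE f e → TY (c • f) =ᵐ[ν] c • TY f) ∧
    -- … and bounded with norm at most `‖R‖`
    (∀ (f : α → Y) (e : E) (g : G), MemKB ιE f e → MemKB ιG (TY f) g →
      ‖g‖ ≤ ‖R‖ * ‖e‖) := by
  refine ⟨?_, ?_, ?_⟩
  · -- additivity
    intro f g e e' hf hg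
    obtain ⟨e'', hfg⟩ := MemKB.add_exists hE hf hg
    obtain ⟨gf, hgf⟩ := hmaps f e hf
    obtain ⟨gg, hgg⟩ := hmaps g e' hg
    obtain ⟨gfg, hgfg⟩ := hmaps (f + g) e'' hfg
    refine ae_eq_of_pair_ae_zero B hB.2 hgfg.1 (hgf.1.add hgg.1) ?_
    intro x
    obtain ⟨ef, hef⟩ := hpair f e x hf
    obtain ⟨eg, heg⟩ := hpair g e' x hg
    have hfgp : (fun a => B x ((f + g) a)) =ᵐ[μ] ⇑(ιE (ef + eg)) := by
      have hc : ⇑(ιE ef + ιE eg) =ᵐ[μ] fun a => (ιE ef) a + (ιE eg) a :=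
        AEEqFun.coeFn_add _ _
      filter_upwards [hef, heg, hc] with a h1 h2 h3
      simp only [Pi.add_apply, map_add]
      rw [h3, ← h1, ← h2]
    have h1 := hrel (f + g) e'' x (ef + eg) hfg hfgp
    have h2 := hrel f e x ef hf hef
    have h3 := hrel g e' x eg hg heg
    have h4 : ⇑(ιG (T (ef + eg))) =ᵐ[ν] fun b => (ιG (T ef)) b + (ιG (T eg)) b := by
      have heq : ιG (T (ef + eg)) = ιG (T ef) + ιG (T eg) := by rw [map_add, map_add]
      rw [heq]; exact AEEqFun.coeFn_add _ _
    filter_upwards [h1, h2, h3, h4] with b hb1 hb2 hb3 hb4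
    simp only [Pi.add_apply]
    rw [hb1, hb4, ← hb2, ← hb3]
    exact ((B x).map_add _ _).symm
  · -- homogeneity
    intro c f e hf
    have hcf : MemKB ιE (c • f) (|c| • e) := by
      refine ⟨hf.1.const_smul c, ?_⟩
      have hc : ⇑(ιE (|c| • e)) =ᵐ[μ] fun a => |c| * (ιE e) a := by
        have heq : ιE (|c| • e) = |c| • ιE e := LinearMap.map_smul _ _ _
        rw [heq]
        filter_upwards [AEEqFun.coeFn_smul |c| (ιE e)] with a ha
        rw [ha]; simp
      filter_upwards [hf.2, hc] with a h1 h2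
      simp only [Pi.smul_apply, norm_smul, Real.norm_eq_abs, h2, ← h1]
    obtain ⟨gcf, hgcf⟩ := hmaps (c • f) (|c| • e) hcf
    obtain ⟨gf, hgf⟩ := hmaps f e hf
    refine ae_eq_of_pair_ae_zero B hB.2 hgcf.1 (hgf.1.const_smul c) ?_
    intro x
    obtain ⟨ef, hef⟩ := hpair f e x hf
    have hcfp : (fun a => B x ((c • f) a)) =ᵐ[μ] ⇑(ιE (c • ef)) := by
      have heq : ιE (c • ef) = c • ιE ef := LinearMap.map_smul _ _ _
      rw [heq]
      filter_upwards [hef, AEEqFun.coeFn_smul c (ιE ef)] with a h1 h2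
      rw [h2]
      simp only [Pi.smul_apply, _root_.map_smul, smul_eq_mul]
      rw [h1]
    have h1 := hrel (c • f) (|c| • e) x (c • ef) hcf hcfp
    have h2 := hrel f e x ef hf hef
    have h4 : ⇑(ιG (T (c • ef))) =ᵐ[ν] fun b => c * (ιG (T ef)) b := by
      have heq : ιG (T (c • ef)) = c • ιG (T ef) := by
        rw [LinearMap.map_smul, LinearMap.map_smul]
      rw [heq]
      filter_upwards [AEEqFun.coeFn_smul c (ιG (T ef))] with b hb
      rw [hb]; simp
    filter_upwards [h1, h2, h4] with b hb1 hb2 hb4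
    simp only [Pi.smul_apply, _root_.map_smul, smul_eq_mul]
    rw [hb1, hb4, ← hb2]
  · -- boundedness
    intro f e g hf hg
    have step : ∀ x : X, ‖x‖ ≤ 1 → ∀ᵐ b ∂ν, |B x (TY f b)| ≤ (ιG (R |e|)) b := by
      intro x hx
      obtain ⟨exy, hexy⟩ := hpair f e x hf
      have h1 : ∀ᵐ a ∂μ, (ιE |exy|) a ≤ (ιE |e|) a := by
        filter_upwards [hexy, hf.2, hE.map_abs exy, hE.map_abs e] with a ha hb hc hd
        rw [hc, hd, ← ha, ← hb]
        have hle : |B x (f a)| ≤ ‖f a‖ := by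
          rw [hB.2 (f a)]
          haveI : Nonempty {x : X // ‖x‖ ≤ 1} := ⟨⟨0, by simp⟩⟩
          exact le_ciSup (bddAbove_pair B (f a)) ⟨x, hx⟩
        exact le_trans hle (le_abs_self _)
      have h2 : |exy| ≤ |e| := hE.le_of_ae_le h1
      have h3 : |T exy| ≤ R |e| := by
        refine le_trans (hdom exy) ?_
        have h := hRpos (|e| - |exy|) (sub_nonneg.mpr h2)
        rw [map_sub] at h
        have := sub_nonneg.mp h
        exact this
      have h4 := hG.ae_le_of_le h3
      have h5 := hrel f e x exy hf hexy
      filter_upwards [h4, h5, hG.map_abs (T exy)] with b hb1 hb2 hb3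
      rw [hb2]
      rw [hb3] at hb1
      exact hb1
    have hnorm : ∀ᵐ b ∂ν, ‖TY f b‖ ≤ (ιG (R |e|)) b :=
      ae_norm_le_of_pair B hB.2 hg.1 step
    set Re : G := R |e| with hRe
    have h8 : ∀ᵐ b ∂ν, (ιG |g|) b ≤ (ιG |Re|) b := by
      filter_upwards [hnorm, hg.2, hG.map_abs g, hG.map_abs Re] with b h1 h2 h3 h4
      rw [h3, h4, ← h2, abs_of_nonneg (norm_nonneg _)]
      exact le_trans h1 (le_abs_self _)
    have h9 : |g| ≤ |Re| := hG.le_of_ae_le h8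
    calc ‖g‖ ≤ ‖Re‖ := norm_le_norm_of_abs_le_abs h9
      _ ≤ ‖R‖ * ‖|e|‖ := R.le_opNorm _
      _ = ‖R‖ * ‖e‖ := by rw [norm_abs_eq_norm]
end

section
/- Let E, G be Banach function spaces, T : E → G bounded linear, and Y a Banach space. Suppose that for every separable closed linear subspace U of Y, T has a U-valued extension T_U ∈ L(E(U), G(U)) satisfying ⟨u*, T_U e⟩ = T⟨u*, e⟩ for all e ∈ E(U), u* ∈ U*. Then T has a Y-valued extension T_Y ∈ L(E(Y), G(Y)) satisfying ⟨y*, T_Y e⟩ = T⟨y*, e⟩ for all e ∈ E(Y), y* ∈ Y*. -/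
open MeasureTheory

/-- `TY` is (a function-level realization of) a bounded linear operator
`E(Y) → G(Y)` which is a `Y`-valued extension of `T : E → G` with respect to the
pairing `⟨Y*, Y⟩`, i.e. `⟨y*, T_Y e⟩ = T ⟨y*, e⟩` for all `e ∈ E(Y)`, `y* ∈ Y*`. -/
def IsVectorExtension {α β E G : Type*} [MeasurableSpace α] [MeasurableSpace β]
    {μ : Measure α} {ν : Measure β}
    [NormedAddCommGroup E] [Lattice E] [HasSolidNorm E] [IsOrderedAddMonoid E] [NormedSpace ℝ E]
    [NormedAddCommGroup G] [Lattice G] [HasSolidNorm G] [IsOrderedAddMonoid G] [NormedSpace ℝ G]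
    (ιE : E →ₗ[ℝ] (α →ₘ[μ] ℝ)) (ιG : G →ₗ[ℝ] (β →ₘ[ν] ℝ))
    (T : E →L[ℝ] G) {Y : Type*} [NormedAddCommGroup Y] [NormedSpace ℝ Y]
    (TY : (α → Y) → (β → Y)) : Prop :=
  -- maps `E(Y)` into `G(Y)`
  (∀ (f : α → Y) (e : E), MemKB ιE f e → ∃ g : G, MemKB ιG (TY f) g) ∧
  -- well-defined on a.e.-equivalence classes
  (∀ f g : α → Y, (∃ e : E, MemKB ιE f e) → f =ᵐ[μ] g → TY f =ᵐ[ν] TY g) ∧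
  -- additive and homogeneous
  (∀ f g : α → Y, (∃ e : E, MemKB ιE f e) → (∃ e : E, MemKB ιE g e) →
    TY (f + g) =ᵐ[ν] TY f + TY g) ∧
  (∀ (c : ℝ) (f : α → Y), (∃ e : E, MemKB ιE f e) → TY (c • f) =ᵐ[ν] c • TY f) ∧
  -- bounded
  (∃ C : ℝ, ∀ (f : α → Y) (e : E) (g : G), MemKB ιE f e → MemKB ιG (TY f) g →
    ‖g‖ ≤ C * ‖e‖) ∧
  -- the defining relation `⟨y*, T_Y e⟩ = T ⟨y*, e⟩`
  (∀ (f : α → Y) (y' : Y →L[ℝ] ℝ) (e exy : E), MemKB ιE f e →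
    ((fun a => y' (f a)) =ᵐ[μ] ⇑(ιE exy)) →
    (fun b => y' (TY f b)) =ᵐ[ν] ⇑(ιG (T exy)))


open TopologicalSpace in
/-- Two a.e. strongly measurable functions that agree a.e. after composing with every
continuous functional agree a.e. -/
lemma sepDual_aux {β : Type*} [MeasurableSpace β] {ν : Measure β}
    {Y : Type*} [NormedAddCommGroup Y] [NormedSpace ℝ Y]
    {h1 h2 : β → Y} (m1 : AEStronglyMeasurable h1 ν)
    (m2 : AEStronglyMeasurable h2 ν)
    (h : ∀ y' : Y →L[ℝ] ℝ, (fun b => y' (h1 b)) =ᵐ[ν] fun b => y' (h2 b)) :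
    h1 =ᵐ[ν] h2 := by
  set t : Set Y := (fun p : Y × Y => p.1 - p.2) ''
    (Set.range (m1.mk h1) ×ˢ Set.range (m2.mk h2)) with ht_def
  have ht : IsSeparable t :=
    ((m1.stronglyMeasurable_mk.isSeparable_range).prod
      m2.stronglyMeasurable_mk.isSeparable_range).image (continuous_fst.sub continuous_snd)
  have key : (fun b => h1 b - h2 b) =ᵐ[ν] 0 := by
    refine ae_eq_zero_of_forall_dual_of_isSeparable ℝ ht (fun c => ?_) ?_
    · filter_upwards [h c] with b hb
      simp only [map_sub, hb, sub_self, Pi.zero_apply]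
    · filter_upwards [m1.ae_eq_mk, m2.ae_eq_mk] with b hb1 hb2
      exact ⟨(m1.mk h1 b, m2.mk h2 b), ⟨Set.mem_range_self _, Set.mem_range_self _⟩,
        by rw [hb1, hb2]⟩
  filter_upwards [key] with b hb
  exact sub_eq_zero.mp hb

open TopologicalSpace in
/-- Corestriction of a strongly measurable function to a separable submodule is
strongly measurable. -/
lemma smCorestrict_aux {α : Type*} [MeasurableSpace α]
    {Y : Type*} [NormedAddCommGroup Y] [NormedSpace ℝ Y] (U : Submodule ℝ Y)
    [SeparableSpace U] {g : α → Y} (hg : StronglyMeasurable g) (hmem : ∀ a, g a ∈ U) :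
    StronglyMeasurable (fun a => (⟨g a, hmem a⟩ : U)) := by
  borelize Y
  haveI : SecondCountableTopology U := UniformSpace.secondCountable_of_separable U
  exact (hg.measurable.subtype_mk).stronglyMeasurable

/-- For `f ∈ E(Y)` and a functional `y'`, the scalar function `⟨y', f⟩` is represented
by an element of `E`, by the ideal property. -/
lemma exists_exy_aux {α E : Type*} [MeasurableSpace α] {μ : Measure α}
    [NormedAddCommGroup E] [Lattice E] [HasSolidNorm E] [IsOrderedAddMonoid E] [NormedSpace ℝ E] [CompleteSpace E]
    {ιE : E →ₗ[ℝ] (α →ₘ[μ] ℝ)} (hE : IsBanachFunctionSpace μ E ιE)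
    {Y : Type*} [NormedAddCommGroup Y] [NormedSpace ℝ Y]
    {f : α → Y} {e : E} (hf : MemKB ιE f e) (y' : Y →L[ℝ] ℝ) :
    ∃ exy : E, (fun a => y' (f a)) =ᵐ[μ] ⇑(ιE exy) := by
  have hm : AEStronglyMeasurable (fun a => y' (f a)) μ :=
    y'.continuous.comp_aestronglyMeasurable hf.1
  set F : α →ₘ[μ] ℝ := AEEqFun.mk _ hm with hFdef
  have hF : ⇑F =ᵐ[μ] fun a => y' (f a) := AEEqFun.coeFn_mk _ _
  have h1 : ⇑(ιE (‖y'‖ • |e|)) =ᵐ[μ] fun a => ‖y'‖ * |(ιE e) a| := by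
    rw [ιE.map_smul]
    filter_upwards [AEEqFun.coeFn_smul (‖y'‖) (ιE |e|), hE.map_abs e] with a ha hb
    rw [ha]
    simp only [Pi.smul_apply, smul_eq_mul]
    rw [hb]
  obtain ⟨e', he'⟩ : ∃ e' : E, ιE e' = F := by
    refine hE.ideal F (‖y'‖ • |e|) ?_
    filter_upwards [hF, h1, hf.2] with a ha hb hc
    rw [ha, hb]
    calc |y' (f a)| ≤ ‖y'‖ * ‖f a‖ := by
          simpa [Real.norm_eq_abs] using y'.le_opNorm (f a)
      _ = ‖y'‖ * |(ιE e) a| := by rw [← hc, abs_norm]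
      _ ≤ abs (‖y'‖ * |(ιE e) a|) := le_abs_self _
  refine ⟨e', ?_⟩
  rw [he']
  exact hF.symm

/-- **Reduction to separable subspaces.** If `T : E → G` has a `U`-valued extension
(with respect to `⟨U*, U⟩`) for every separable closed linear subspace `U` of `Y`,
then `T` has a `Y`-valued extension with respect to `⟨Y*, Y⟩`. -/
theorem extension_of_separable_subspace_extensions
    {α β E G : Type*} [MeasurableSpace α] [MeasurableSpace β]
    {μ : Measure α} {ν : Measure β}
    [NormedAddCommGroup E] [Lattice E] [HasSolidNorm E] [IsOrderedAddMonoid E] [NormedSpace ℝ E] [CompleteSpace E]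
    [NormedAddCommGroup G] [Lattice G] [HasSolidNorm G] [IsOrderedAddMonoid G] [NormedSpace ℝ G] [CompleteSpace G]
    (ιE : E →ₗ[ℝ] (α →ₘ[μ] ℝ)) (ιG : G →ₗ[ℝ] (β →ₘ[ν] ℝ))
    (hE : IsBanachFunctionSpace μ E ιE) (hG : IsBanachFunctionSpace ν G ιG)
    (T : E →L[ℝ] G)
    {Y : Type*} [NormedAddCommGroup Y] [NormedSpace ℝ Y] [CompleteSpace Y]
    (hU : ∀ U : Submodule ℝ Y, IsClosed (U : Set Y) →
      TopologicalSpace.SeparableSpace U →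
      ∃ TU : (α → U) → (β → U), IsVectorExtension ιE ιG T TU) :
    ∃ TY : (α → Y) → (β → Y), IsVectorExtension ιE ιG T TY := by
  classical
  -- Step 1: for every `f ∈ E(Y)` construct a candidate image function, together with
  -- the two key properties: it lies in `G(Y)` and satisfies the duality relation.
  have key : ∀ f : α → Y, (∃ e : E, MemKB ιE f e) → ∃ Tf : β → Y,
      (∃ g : G, MemKB ιG Tf g) ∧
      (∀ (y' : Y →L[ℝ] ℝ) (exy : E), ((fun a => y' (f a)) =ᵐ[μ] ⇑(ιE exy)) →
        (fun b => y' (Tf b)) =ᵐ[ν] ⇑(ιG (T exy))) := by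
    intro f hf
    obtain ⟨e, hfe⟩ := hf
    set g0 : α → Y := hfe.1.mk f with hg0def
    have hg0 : StronglyMeasurable g0 := hfe.1.stronglyMeasurable_mk
    have hfg0 : f =ᵐ[μ] g0 := hfe.1.ae_eq_mk
    set U : Submodule ℝ Y := (Submodule.span ℝ (Set.range g0)).topologicalClosure with hUdef
    have hclosed : IsClosed (U : Set Y) := Submodule.isClosed_topologicalClosure _
    have hsepset : TopologicalSpace.IsSeparable (U : Set Y) := by
      rw [hUdef, Submodule.topologicalClosure_coe]
      exact (hg0.isSeparable_range.span).closure
    haveI hsep : TopologicalSpace.SeparableSpace U := hsepset.separableSpace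
    obtain ⟨TU, hTU⟩ := hU U hclosed hsep
    have hmem : ∀ a, g0 a ∈ U := fun a =>
      Submodule.le_topologicalClosure _ (Submodule.subset_span ⟨a, rfl⟩)
    set f' : α → U := fun a => ⟨g0 a, hmem a⟩ with hf'def
    have hf'm : AEStronglyMeasurable f' μ :=
      (smCorestrict_aux U hg0 hmem).aestronglyMeasurable
    have hf' : MemKB ιE f' e := by
      refine ⟨hf'm, ?_⟩
      filter_upwards [hfe.2, hfg0] with a h1 h2
      show ‖(f' a : Y)‖ = (ιE e) a
      rw [hf'def]
      dsimp only
      rw [← h2]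
      exact h1
    refine ⟨fun b => ((TU f' b : Y)), ?_, ?_⟩
    · obtain ⟨g, hg⟩ := hTU.1 f' e hf'
      exact ⟨g, continuous_subtype_val.comp_aestronglyMeasurable hg.1, hg.2⟩
    · intro y' exy hexy
      have h6 := hTU.2.2.2.2.2 f' (y'.comp U.subtypeL) e exy hf' ?_
      · exact h6
      · filter_upwards [hexy, hfg0] with a h1 h2
        show y' (g0 a) = (ιE exy) a
        rw [← h2]
        exact h1
  choose TY0 hTY0 using key
  set TY : (α → Y) → (β → Y) := fun f =>
    if h : ∃ e : E, MemKB ιE f e then TY0 f h else 0 with hTYdef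
  have hA : ∀ (f : α → Y) (h : ∃ e : E, MemKB ιE f e), ∃ g : G, MemKB ιG (TY f) g := by
    intro f h
    rw [hTYdef]
    dsimp only
    rw [dif_pos h]
    exact (hTY0 f h).1
  have hB : ∀ (f : α → Y) (h : ∃ e : E, MemKB ιE f e) (y' : Y →L[ℝ] ℝ) (exy : E),
      ((fun a => y' (f a)) =ᵐ[μ] ⇑(ιE exy)) →
      (fun b => y' (TY f b)) =ᵐ[ν] ⇑(ιG (T exy)) := by
    intro f h y' exy hexy
    have := (hTY0 f h).2 y' exy hexy
    rw [hTYdef]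
    dsimp only
    rw [dif_pos h]
    exact this
  refine ⟨TY, ?_, ?_, ?_, ?_, ?_, ?_⟩
  -- (1) maps `E(Y)` into `G(Y)`
  · intro f e hf
    exact hA f ⟨e, hf⟩
  -- (2) a.e. well-defined
  · intro f g hf hfg
    obtain ⟨e, hfe⟩ := hf
    have hge : MemKB ιE g e := ⟨hfe.1.congr hfg, by
      filter_upwards [hfe.2, hfg] with a h1 h2; rw [← h2]; exact h1⟩
    refine sepDual_aux (hA f ⟨e, hfe⟩).choose_spec.1 (hA g ⟨e, hge⟩).choose_spec.1 ?_
    intro y'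
    obtain ⟨exy, hexy⟩ := exists_exy_aux hE hfe y'
    have t1 := hB f ⟨e, hfe⟩ y' exy hexy
    have t2 := hB g ⟨e, hge⟩ y' exy (by
      filter_upwards [hexy, hfg] with a h1 h2; rw [← h2]; exact h1)
    exact t1.trans t2.symm
  -- (3) additive
  · intro f g hf hg
    obtain ⟨e1, h1⟩ := hf
    obtain ⟨e2, h2⟩ := hg
    have hm : AEStronglyMeasurable (fun a => ‖f a + g a‖) μ := (h1.1.add h2.1).norm
    obtain ⟨e3, he3⟩ : ∃ e3 : E, ιE e3 = AEEqFun.mk _ hm := by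
      refine hE.ideal _ (|e1| + |e2|) ?_
      have hsum : ⇑(ιE (|e1| + |e2|)) =ᵐ[μ] fun a => |(ιE e1) a| + |(ιE e2) a| := by
        rw [map_add]
        filter_upwards [AEEqFun.coeFn_add (ιE |e1|) (ιE |e2|), hE.map_abs e1,
          hE.map_abs e2] with a ha hb hc
        rw [ha, Pi.add_apply, hb, hc]
      filter_upwards [AEEqFun.coeFn_mk _ hm, hsum, h1.2, h2.2] with a ha hb hc hd
      rw [ha, hb]
      calc |‖f a + g a‖| = ‖f a + g a‖ := abs_norm _
        _ ≤ ‖f a‖ + ‖g a‖ := norm_add_le _ _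
        _ = |(ιE e1) a| + |(ιE e2) a| := by rw [← hc, ← hd, abs_norm, abs_norm]
        _ ≤ abs (|(ιE e1) a| + |(ιE e2) a|) := le_abs_self _
    have h3 : MemKB ιE (f + g) e3 := by
      refine ⟨h1.1.add h2.1, ?_⟩
      rw [he3]
      exact (AEEqFun.coeFn_mk _ hm).symm
    refine sepDual_aux (hA (f + g) ⟨e3, h3⟩).choose_spec.1 ?_ ?_
    · exact (hA f ⟨e1, h1⟩).choose_spec.1.add (hA g ⟨e2, h2⟩).choose_spec.1
    intro y'
    obtain ⟨exy1, hexy1⟩ := exists_exy_aux hE h1 y'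
    obtain ⟨exy2, hexy2⟩ := exists_exy_aux hE h2 y'
    have hsum : (fun a => y' ((f + g) a)) =ᵐ[μ] ⇑(ιE (exy1 + exy2)) := by
      rw [map_add]
      filter_upwards [hexy1, hexy2, AEEqFun.coeFn_add (ιE exy1) (ιE exy2)] with a ha hb hc
      rw [hc]
      simp only [Pi.add_apply]
      rw [← ha, ← hb]
      exact y'.map_add _ _
    have t0 := hB (f + g) ⟨e3, h3⟩ y' (exy1 + exy2) hsum
    have t1 := hB f ⟨e1, h1⟩ y' exy1 hexy1
    have t2 := hB g ⟨e2, h2⟩ y' exy2 hexy2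
    have hT : T (exy1 + exy2) = T exy1 + T exy2 := map_add _ _ _
    refine t0.trans ?_
    rw [hT, map_add]
    filter_upwards [AEEqFun.coeFn_add (ιG (T exy1)) (ιG (T exy2)), t1, t2] with b ha hb hc
    rw [ha]
    simp only [Pi.add_apply]
    rw [← hb, ← hc]
    exact (y'.map_add _ _).symm
  -- (4) homogeneous
  · intro c f hf
    obtain ⟨e1, h1⟩ := hf
    have h2 : MemKB ιE (c • f) (|c| • e1) := by
      refine ⟨h1.1.const_smul c, ?_⟩
      rw [ιE.map_smul]
      filter_upwards [h1.2, AEEqFun.coeFn_smul (|c|) (ιE e1)] with a ha hb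
      rw [hb]
      simp only [Pi.smul_apply, smul_eq_mul]
      rw [← ha]
      simp [norm_smul, Real.norm_eq_abs]
    refine sepDual_aux (hA (c • f) ⟨_, h2⟩).choose_spec.1
      ((hA f ⟨e1, h1⟩).choose_spec.1.const_smul c) ?_
    intro y'
    obtain ⟨exy1, hexy1⟩ := exists_exy_aux hE h1 y'
    have hsm : (fun a => y' ((c • f) a)) =ᵐ[μ] ⇑(ιE (c • exy1)) := by
      rw [ιE.map_smul]
      filter_upwards [hexy1, AEEqFun.coeFn_smul c (ιE exy1)] with a ha hb
      rw [hb]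
      simp only [Pi.smul_apply, smul_eq_mul]
      rw [← ha]
      simp
    have t0 := hB (c • f) ⟨_, h2⟩ y' (c • exy1) hsm
    have t1 := hB f ⟨e1, h1⟩ y' exy1 hexy1
    have hT : T (c • exy1) = c • T exy1 := map_smul _ _ _
    refine t0.trans ?_
    rw [hT, ιG.map_smul]
    filter_upwards [AEEqFun.coeFn_smul c (ιG (T exy1)), t1] with b ha hb
    rw [ha]
    simp only [Pi.smul_apply, smul_eq_mul]
    rw [← hb]
    simp
  -- (5) bounded
  · by_contra hC
    push_neg at hC
    choose fn en gn hfn hgn hlt using fun n : ℕ => hC n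
    set mkn : ℕ → α → Y := fun n => (hfn n).1.mk (fn n) with hmkndef
    have hmkn : ∀ n, StronglyMeasurable (mkn n) := fun n => (hfn n).1.stronglyMeasurable_mk
    have hfmkn : ∀ n, fn n =ᵐ[μ] mkn n := fun n => (hfn n).1.ae_eq_mk
    set U : Submodule ℝ Y :=
      (Submodule.span ℝ (⋃ n, Set.range (mkn n))).topologicalClosure with hUdef
    have hclosed : IsClosed (U : Set Y) := Submodule.isClosed_topologicalClosure _
    have hsepset : TopologicalSpace.IsSeparable (U : Set Y) := by
      rw [hUdef, Submodule.topologicalClosure_coe]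
      exact ((TopologicalSpace.IsSeparable.iUnion fun n =>
        (hmkn n).isSeparable_range).span).closure
    haveI hsep : TopologicalSpace.SeparableSpace U := hsepset.separableSpace
    obtain ⟨TU, hTU⟩ := hU U hclosed hsep
    have hmem : ∀ n a, mkn n a ∈ U := fun n a =>
      Submodule.le_topologicalClosure _
        (Submodule.subset_span (Set.mem_iUnion.2 ⟨n, ⟨a, rfl⟩⟩))
    set fU : ℕ → α → U := fun n a => ⟨mkn n a, hmem n a⟩ with hfUdef
    have hfU : ∀ n, MemKB ιE (fU n) (en n) := by
      intro n
      refine ⟨(smCorestrict_aux U (hmkn n) (hmem n)).aestronglyMeasurable, ?_⟩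
      filter_upwards [(hfn n).2, hfmkn n] with a ha hb
      show ‖(fU n a : Y)‖ = (ιE (en n)) a
      rw [hfUdef]
      dsimp only
      rw [← hb]
      exact ha
    obtain ⟨CU, hCU⟩ := hTU.2.2.2.2.1
    set n₀ : ℕ := ⌈CU⌉₊ with hn₀def
    obtain ⟨gUn, hgUn⟩ := hTU.1 (fU n₀) (en n₀) (hfU n₀)
    have hcomp : TY (fn n₀) =ᵐ[ν] fun b => ((TU (fU n₀) b : Y)) := by
      refine sepDual_aux (hgn n₀).1
        (continuous_subtype_val.comp_aestronglyMeasurable hgUn.1) ?_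
      intro y'
      obtain ⟨exy, hexy⟩ := exists_exy_aux hE (hfn n₀) y'
      have t1 := hB (fn n₀) ⟨en n₀, hfn n₀⟩ y' exy hexy
      have t2 := hTU.2.2.2.2.2 (fU n₀) (y'.comp U.subtypeL) (en n₀) exy (hfU n₀) (by
        filter_upwards [hexy, hfmkn n₀] with a ha hb
        show y' (mkn n₀ a) = (ιE exy) a
        rw [← hb]
        exact ha)
      exact t1.trans t2.symm
    have heq : gUn = gn n₀ := by
      refine hG.inj (AEEqFun.ext ?_)
      have h1 : ⇑(ιG gUn) =ᵐ[ν] fun b => ‖(TU (fU n₀) b : Y)‖ := hgUn.2.symm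
      have h2 : ⇑(ιG (gn n₀)) =ᵐ[ν] fun b => ‖TY (fn n₀) b‖ := (hgn n₀).2.symm
      refine h1.trans (Filter.EventuallyEq.trans ?_ h2.symm)
      filter_upwards [hcomp] with b hb
      rw [hb]
    have hb1 : ‖gUn‖ ≤ CU * ‖en n₀‖ := hCU (fU n₀) (en n₀) gUn (hfU n₀) hgUn
    have hb2 : (n₀ : ℝ) * ‖en n₀‖ < ‖gn n₀‖ := hlt n₀
    have hb3 : CU * ‖en n₀‖ ≤ (n₀ : ℝ) * ‖en n₀‖ :=
      mul_le_mul_of_nonneg_right (Nat.le_ceil CU) (norm_nonneg _)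
    rw [← heq] at hb2
    linarith
  -- (6) defining relation
  · intro f y' e exy hf hexy
    exact hB f ⟨e, hf⟩ y' exy hexy
end
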